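/- Let U = {p ∈ ℝ^d : W p ≤ h} be a nonempty bounded polyhedron, let m ∈ U, s ≥ 0, and take risk levels ε_i = 1 for every player i. Then x ∈ S is a distributionally robust optimization equilibrium for the ambiguity set 𝓕(W,h,m,s) if and only if x is a Nash equilibrium of the complete-information game with the payoff matrix M satisfying vec(M) = m. -/

import Mathlib

open MeasureTheory Matrix

namespace DRG

/-- A payoff matrix: assigns to each player `i` and each joint action a real payoff. -/
abbrev Payoff (N : ℕ) (a : Fin N → ℕ) : Type := Fin N → (∀ k : Fin N, Fin (a k)) → ℝ

/-- A (not necessarily feasible) strategy profile. -/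
abbrev Strategy (N : ℕ) (a : Fin N → ℕ) : Type := ∀ k : Fin N, Fin (a k) → ℝ

/-- Index type for the vectorization of a payoff matrix. -/
abbrev Idx (N : ℕ) (a : Fin N → ℕ) : Type := Fin N × (∀ k : Fin N, Fin (a k))

/-- Vectorization of a payoff matrix. -/
def vecP {N : ℕ} {a : Fin N → ℕ} (P : Payoff N a) : Idx N a → ℝ := fun q => P q.1 q.2

/-- The mixed-strategy simplex `S_n`. -/
def simplex (n : ℕ) : Set (Fin n → ℝ) := {x | (∀ j, 0 ≤ x j) ∧ ∑ j, x j = 1}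

/-- The set `S` of mixed strategy profiles. -/
def profiles (N : ℕ) (a : Fin N → ℕ) : Set (Strategy N a) :=
  {x | ∀ i, x i ∈ simplex (a i)}

/-- Expected payoff `π_i(P;x)`. -/
noncomputable def pay {N : ℕ} {a : Fin N → ℕ} (P : Payoff N a) (i : Fin N)
    (x : Strategy N a) : ℝ :=
  ∑ j : (∀ k : Fin N, Fin (a k)), P i j * ∏ k, x k (j k)

/-- Nash equilibrium of the complete information game with payoff matrix `P`. -/
def IsNashEq {N : ℕ} {a : Fin N → ℕ} (P : Payoff N a) (x : Strategy N a) : Prop :=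
  x ∈ profiles N a ∧ ∀ i : Fin N, ∀ u ∈ simplex (a i),
    pay P i (Function.update x i u) ≤ pay P i x

/-- Robust optimization equilibrium for uncertainty set `U`. -/
def IsRobustEq {N : ℕ} {a : Fin N → ℕ} (U : Set (Payoff N a)) (x : Strategy N a) : Prop :=
  x ∈ profiles N a ∧ ∀ i : Fin N, ∀ u ∈ simplex (a i),
    (⨅ P : U, pay (P : Payoff N a) i (Function.update x i u)) ≤
      ⨅ P : U, pay (P : Payoff N a) i x

/-- Conditional value at risk of the loss `L` at level `ε` under `Q`. -/
noncomputable def cvar {V : Type*} [MeasurableSpace V] (Q : Measure V) (ε : ℝ)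
    (L : V → ℝ) : ℝ :=
  ⨅ ζ : ℝ, (ζ + (1 / ε) * ∫ p, max (L p - ζ) 0 ∂Q)

/-- Distributionally robust optimization equilibrium for ambiguity set `𝓕` and
risk levels `ε`. -/
def IsDREq {N : ℕ} {a : Fin N → ℕ} (𝓕 : Set (Measure (Payoff N a))) (ε : Fin N → ℝ)
    (x : Strategy N a) : Prop :=
  x ∈ profiles N a ∧ ∀ i : Fin N, ∀ u ∈ simplex (a i),
    (⨆ Q : 𝓕, cvar (Q : Measure (Payoff N a)) (ε i) (fun P => - pay P i x)) ≤
      ⨆ Q : 𝓕, cvar (Q : Measure (Payoff N a)) (ε i)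
        (fun P => - pay P i (Function.update x i u))

/-- The ambiguity set `𝓕(W,h,m,s)`. -/
def ambiguity {N : ℕ} {a : Fin N → ℕ} (r : ℕ) (W : Matrix (Fin r) (Idx N a) ℝ)
    (h : Fin r → ℝ) (m : Idx N a → ℝ) (s : ℝ) : Set (Measure (Payoff N a)) :=
  {Q | IsProbabilityMeasure Q ∧ Integrable (fun p => p) Q ∧
    Q {P | ∀ t, (W *ᵥ vecP P) t ≤ h t} = 1 ∧
    vecP (∫ p, p ∂Q) = m ∧
    (∫ p, ∑ q, |vecP p q - m q| ∂Q) ≤ s}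

/-- The matrix `Y^i(x^{-i})` satisfying `vec(P)ᵀ Y^i(x^{-i}) uⁱ = π_i(P;(x^{-i},uⁱ))`. -/
noncomputable def Ymat {N : ℕ} {a : Fin N → ℕ} (i : Fin N) (x : Strategy N a) :
    Matrix (Idx N a) (Fin (a i)) ℝ :=
  Matrix.of fun q l =>
    if q.1 = i ∧ q.2 i = l then ∏ r ∈ Finset.univ.erase i, x r (q.2 r) else 0

section aux
variable {N : ℕ} {a : Fin N → ℕ}

/-- Evaluation of a payoff matrix at a player and joint action, as a CLM. -/
noncomputable def evCLM (i : Fin N) (j : ∀ k : Fin N, Fin (a k)) : Payoff N a →L[ℝ] ℝ :=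
  (ContinuousLinearMap.proj (R := ℝ) (φ := fun _ : (∀ k : Fin N, Fin (a k)) => ℝ) j).comp
    (ContinuousLinearMap.proj (R := ℝ) (φ := fun _ : Fin N => (∀ k : Fin N, Fin (a k)) → ℝ) i)

lemma integrable_pay (Q : Measure (Payoff N a)) (hint : Integrable (fun p => p) Q)
    (i : Fin N) (y : Strategy N a) : Integrable (fun P => pay P i y) Q := by
  unfold pay
  exact integrable_finset_sum _ fun j _ => ((evCLM i j).integrable_comp hint).mul_const _

lemma integral_pay (Q : Measure (Payoff N a)) (hint : Integrable (fun p => p) Q)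
    (i : Fin N) (y : Strategy N a) : ∫ P, pay P i y ∂Q = pay (∫ p, p ∂Q) i y := by
  unfold pay
  have hint' : ∀ j ∈ Finset.univ, Integrable
      (fun P : Payoff N a => P i j * ∏ k, y k (j k)) Q :=
    fun j _ => ((evCLM i j).integrable_comp hint).mul_const _
  rw [integral_finset_sum _ hint']
  refine Finset.sum_congr rfl fun j _ => ?_
  rw [integral_mul_const]
  congr 1
  exact (evCLM i j).integral_comp_comm hint

lemma closed_poly {r : ℕ} (W : Matrix (Fin r) (Idx N a) ℝ) (h : Fin r → ℝ) :
    IsClosed {P : Payoff N a | ∀ t, (W *ᵥ vecP P) t ≤ h t} := by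
  have : {P : Payoff N a | ∀ t, (W *ᵥ vecP P) t ≤ h t}
      = ⋂ t, {P : Payoff N a | (W *ᵥ vecP P) t ≤ h t} := by ext P; simp
  rw [this]
  refine isClosed_iInter fun t => isClosed_le ?_ continuous_const
  unfold Matrix.mulVec dotProduct
  continuity

/-- Key computation: for `Q` in the ambiguity set, the level-1 CVaR of the loss
is the expected loss under the mean payoff matrix. -/
lemma cvar_eq {r : ℕ} (W : Matrix (Fin r) (Idx N a) ℝ) (h : Fin r → ℝ)
    (m : Idx N a → ℝ) (s : ℝ)
    (hbdd : Bornology.IsBounded {p : Idx N a → ℝ | ∀ t, (W *ᵥ p) t ≤ h t})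
    (Q : Measure (Payoff N a)) (hQ : Q ∈ ambiguity r W h m s)
    (M : Payoff N a) (hM : vecP M = m) (i : Fin N) (y : Strategy N a) :
    cvar Q 1 (fun P => - pay P i y) = - pay M i y := by
  obtain ⟨hprob, hint, hsupp, hmean, -⟩ := hQ
  haveI := hprob
  have hMean : (∫ p, p ∂Q) = M := by
    funext i' j'
    exact congrFun (hmean.trans hM.symm) (i', j')
  have hintpay : Integrable (fun P => pay P i y) Q := integrable_pay Q hint i y
  have hI : ∫ P, pay P i y ∂Q = pay M i y := by rw [integral_pay Q hint i y, hMean]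
  set L : Payoff N a → ℝ := fun P => - pay P i y with hLdef
  have hL : Integrable L Q := hintpay.neg
  have hIL : ∫ P, L P ∂Q = - pay M i y := by rw [hLdef]; rw [integral_neg, hI]
  -- the bound
  obtain ⟨C, hC⟩ := hbdd.exists_norm_le
  set B : ℝ := ∑ j : (∀ k : Fin N, Fin (a k)), C * |∏ k, y k (j k)| with hBdef
  have hae : ∀ᵐ P ∂Q, ∀ t, (W *ᵥ vecP P) t ≤ h t := by
    have hmeas := (closed_poly W h).measurableSet
    rw [ae_iff]
    have : {P : Payoff N a | ¬ ∀ t, (W *ᵥ vecP P) t ≤ h t}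
        = {P : Payoff N a | ∀ t, (W *ᵥ vecP P) t ≤ h t}ᶜ := rfl
    rw [this, measure_compl hmeas (measure_ne_top Q _), hsupp, measure_univ]
    simp
  have hpayB : ∀ᵐ P ∂Q, pay P i y ≤ B := by
    refine hae.mono fun P hP => ?_
    have hPmem : vecP P ∈ {p : Idx N a → ℝ | ∀ t, (W *ᵥ p) t ≤ h t} := hP
    have hnorm := hC _ hPmem
    calc pay P i y ≤ |pay P i y| := le_abs_self _
      _ ≤ ∑ j : (∀ k : Fin N, Fin (a k)), |P i j * ∏ k, y k (j k)| :=
          Finset.abs_sum_le_sum_abs _ _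
      _ ≤ B := by
          rw [hBdef]
          refine Finset.sum_le_sum fun j _ => ?_
          rw [abs_mul]
          refine mul_le_mul_of_nonneg_right ?_ (abs_nonneg _)
          calc |P i j| = ‖vecP P (i, j)‖ := rfl
            _ ≤ ‖vecP P‖ := norm_le_pi_norm _ _
            _ ≤ C := hnorm
  -- compute the cvar
  have lb : ∀ ζ : ℝ, - pay M i y ≤ ζ + ∫ P, max (L P - ζ) 0 ∂Q := by
    intro ζ
    have h1 : ∫ P, (L P - ζ) ∂Q ≤ ∫ P, max (L P - ζ) 0 ∂Q :=
      integral_mono (hL.sub (integrable_const ζ)) (hL.sub (integrable_const ζ)).pos_part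
        fun P => le_max_left _ _
    have h2 : ∫ P, (L P - ζ) ∂Q = - pay M i y - ζ := by
      rw [integral_sub hL (integrable_const ζ), hIL, integral_const, probReal_univ]
      simp
    linarith
  unfold cvar
  simp only [one_div_one, one_mul]
  refine le_antisymm ?_ (le_ciInf lb)
  have hbdd' : BddBelow (Set.range fun ζ : ℝ => ζ + ∫ P, max (L P - ζ) 0 ∂Q) := by
    refine ⟨- pay M i y, ?_⟩
    rintro z ⟨ζ, rfl⟩
    exact lb ζ
  calc (⨅ ζ : ℝ, (ζ + ∫ P, max (L P - ζ) 0 ∂Q))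
      ≤ (-B) + ∫ P, max (L P - (-B)) 0 ∂Q := ciInf_le hbdd' (-B)
    _ = - pay M i y := by
        have hcong : ∫ P, max (L P - (-B)) 0 ∂Q = ∫ P, (L P + B) ∂Q := by
          refine integral_congr_ae (hpayB.mono fun P hP => ?_)
          have : 0 ≤ L P + B := by rw [hLdef]; dsimp only; linarith
          show max (L P - (-B)) 0 = L P + B
          rw [sub_neg_eq_add, max_eq_left this]
        rw [hcong, integral_add hL (integrable_const B), hIL, integral_const, probReal_univ]
        simp

/-- The Dirac measure at the mean payoff matrix belongs to the ambiguity set. -/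
lemma dirac_mem_ambiguity {r : ℕ} (W : Matrix (Fin r) (Idx N a) ℝ) (h : Fin r → ℝ)
    (m : Idx N a → ℝ) (hm : ∀ t, (W *ᵥ m) t ≤ h t) (s : ℝ) (hs : 0 ≤ s)
    (M : Payoff N a) (hM : vecP M = m) :
    (Measure.dirac M) ∈ ambiguity r W h m s := by
  have hMmem : M ∈ {P : Payoff N a | ∀ t, (W *ᵥ vecP P) t ≤ h t} := by
    intro t; rw [hM]; exact hm t
  refine ⟨inferInstance, ?_, ?_, ?_, ?_⟩
  · refine ⟨aestronglyMeasurable_id, ?_⟩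
    simp [HasFiniteIntegral, lintegral_dirac]
  · exact Measure.dirac_apply_of_mem hMmem
  · rw [integral_dirac (fun p : Payoff N a => p) M, hM]
  · have : ∫ p, ∑ q, |vecP p q - m q| ∂(Measure.dirac M)
        = ∑ q, |vecP M q - m q| := by
      refine integral_dirac' _ _ ?_
      refine Continuous.stronglyMeasurable ?_
      refine continuous_finset_sum _ fun q _ => ?_
      refine Continuous.abs (Continuous.sub ?_ continuous_const)
      exact (continuous_apply _).comp (continuous_apply _)
    rw [this, hM]
    simpa using hs

end aux

/-- **Special case: risk-neutral players.**
Let `U = {p : W p ≤ h}` be a nonempty bounded polyhedron, `m ∈ U`, `s ≥ 0`, and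
take risk levels `ε_i = 1` for every player.  Then `x ∈ S` is a
distributionally robust optimization equilibrium for the ambiguity set
`𝓕(W,h,m,s)` iff `x` is a Nash equilibrium of the complete-information game
with the payoff matrix `M` satisfying `vec(M) = m`. -/
theorem drEq_iff_nashEq_of_riskNeutral {N r : ℕ} (hN : 1 ≤ N)
    (a : Fin N → ℕ) (ha : ∀ i, 1 ≤ a i)
    (W : Matrix (Fin r) (Idx N a) ℝ) (h : Fin r → ℝ) (m : Idx N a → ℝ)
    (hne : {p : Idx N a → ℝ | ∀ t, (W *ᵥ p) t ≤ h t}.Nonempty)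
    (hbdd : Bornology.IsBounded {p : Idx N a → ℝ | ∀ t, (W *ᵥ p) t ≤ h t})
    (hm : ∀ t, (W *ᵥ m) t ≤ h t) (s : ℝ) (hs : 0 ≤ s)
    (M : Payoff N a) (hM : vecP M = m) (x : Strategy N a) :
    IsDREq (ambiguity r W h m s) (fun _ => 1) x ↔ IsNashEq M x := by
  haveI : Nonempty ↥(ambiguity r W h m s) :=
    ⟨⟨_, dirac_mem_ambiguity W h m hm s hs M hM⟩⟩
  have key : ∀ (i : Fin N) (y : Strategy N a),
      (⨆ Q : (ambiguity r W h m s), cvar (Q : Measure (Payoff N a)) 1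
        (fun P => - pay P i y)) = - pay M i y := by
    intro i y
    have : ∀ Q : (ambiguity r W h m s), cvar (Q : Measure (Payoff N a)) 1
        (fun P => - pay P i y) = - pay M i y := fun Q =>
      cvar_eq W h m s hbdd Q Q.2 M hM i y
    rw [iSup_congr this]
    exact ciSup_const
  constructor
  · rintro ⟨hx, hineq⟩
    refine ⟨hx, fun i u hu => ?_⟩
    have := hineq i u hu
    rw [key i x, key i (Function.update x i u)] at this
    linarith
  · rintro ⟨hx, hineq⟩
    refine ⟨hx, fun i u hu => ?_⟩
    rw [key i x, key i (Function.update x i u)]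
    have := hineq i u hu
    linarith


end DRG
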